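/- Let P and Q be simple graphs of orders p and q respectively, each 2-connected, not complete, and not bipartite. Form a signed graph Σ as follows: take P with all edges positive, Q with all edges negative, and add all pq edges between V(P) and V(Q), each positive (so the added edges form an all-positive complete bipartite graph K_{p,q}). Then Σ is not balanced, not antibalanced, and not geodetic, but Σ is distance-compatible (indeed Σ has diameter 2 and every shortest path between non-adjacent vertices is positive). -/

import Mathlib

open SimpleGraph

/-- The sign (product of edge signs) of a walk in a graph, computed along its darts. -/
def walkSign {V : Type*} {G : SimpleGraph V} (σ : V → V → ℤ) {u v : V} (p : G.Walk u v) : ℤ :=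
  (p.darts.map fun d => σ d.toProd.1 d.toProd.2).prod

/-- `σ` is a signature on `G`: a symmetric function that is `±1`-valued on edges. -/
def IsSignature {V : Type*} (G : SimpleGraph V) (σ : V → V → ℤ) : Prop :=
  (∀ u v, σ u v = σ v u) ∧ ∀ u v, G.Adj u v → σ u v = 1 ∨ σ u v = -1

/-- A signed graph is balanced when every cycle has sign `+1`. -/
def IsBalanced {V : Type*} (G : SimpleGraph V) (σ : V → V → ℤ) : Prop :=
  ∀ (u : V) (p : G.Walk u u), p.IsCycle → walkSign σ p = 1

/-- A walk is a shortest path when it is a path whose length is the graph distance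
between its endpoints. -/
def IsShortestPath {V : Type*} {G : SimpleGraph V} {u v : V} (p : G.Walk u v) : Prop :=
  p.IsPath ∧ p.length = G.dist u v

open scoped Classical in
/-- `σmax u v = +1` if some shortest `u v`-path is positive, `-1` otherwise. -/
noncomputable def sigmaMax {V : Type*} (G : SimpleGraph V) (σ : V → V → ℤ) (u v : V) : ℤ :=
  if ∃ p : G.Walk u v, IsShortestPath p ∧ walkSign σ p = 1 then 1 else -1

open scoped Classical in
/-- `σmin u v = +1` if all shortest `u v`-paths are positive, `-1` otherwise. -/
noncomputable def sigmaMin {V : Type*} (G : SimpleGraph V) (σ : V → V → ℤ) (u v : V) : ℤ :=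
  if ∀ p : G.Walk u v, IsShortestPath p → walkSign σ p = 1 then 1 else -1

/-- The signed distance matrix `D^max`, with `(u,v)` entry `σmax(u,v)·d(u,v)`. -/
noncomputable def Dmax {V : Type*} (G : SimpleGraph V) (σ : V → V → ℤ) : Matrix V V ℝ :=
  Matrix.of fun u v => (sigmaMax G σ u v : ℝ) * (G.dist u v : ℝ)

/-- The signed distance matrix `D^min`, with `(u,v)` entry `σmin(u,v)·d(u,v)`. -/
noncomputable def Dmin {V : Type*} (G : SimpleGraph V) (σ : V → V → ℤ) : Matrix V V ℝ :=
  Matrix.of fun u v => (sigmaMin G σ u v : ℝ) * (G.dist u v : ℝ)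

/-- Two vertices are distance-compatible if all shortest paths between them have the
same sign. -/
def Compatible {V : Type*} (G : SimpleGraph V) (σ : V → V → ℤ) (u v : V) : Prop :=
  ∀ p q : G.Walk u v, IsShortestPath p → IsShortestPath q → walkSign σ p = walkSign σ q

/-- A signed graph is distance-compatible if every pair of vertices is
distance-compatible. -/
def IsCompatibleGraph {V : Type*} (G : SimpleGraph V) (σ : V → V → ℤ) : Prop :=
  ∀ u v, Compatible G σ u v

/-- The largest eigenvalue of a (symmetric) real matrix: the supremum of the set of real
roots of its characteristic polynomial. -/
noncomputable def largestEigenvalue {n : Type*} [Fintype n] [DecidableEq n]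
    (M : Matrix n n ℝ) : ℝ :=
  sSup {x : ℝ | M.charpoly.IsRoot x}

/-- A finite graph is 2-connected: it has at least 3 vertices and deleting any single
vertex leaves it connected. -/
def TwoConnected {W : Type*} [Fintype W] (H : SimpleGraph W) : Prop :=
  3 ≤ Fintype.card W ∧ ∀ v : W, (H.induce {w | w ≠ v}).Connected

/-- A graph is geodetic if every pair of vertices is joined by a unique shortest path. -/
def IsGeodetic {V : Type*} (G : SimpleGraph V) : Prop :=
  ∀ (u v : V) (p q : G.Walk u v), IsShortestPath p → IsShortestPath q → p = q

/-- The join of two graphs `P` and `Q` across a complete bipartite graph: all `pq` edges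
between `V(P)` and `V(Q)` are added. -/
def sumJoin {α β : Type*} (P : SimpleGraph α) (Q : SimpleGraph β) :
    SimpleGraph (α ⊕ β) where
  Adj u v :=
    match u, v with
    | Sum.inl a, Sum.inl a' => P.Adj a a'
    | Sum.inr b, Sum.inr b' => Q.Adj b b'
    | Sum.inl _, Sum.inr _ => True
    | Sum.inr _, Sum.inl _ => True
  symm := by
    constructor
    rintro (a | a) (b | b) h
    · exact P.adj_symm h
    · trivial
    · trivial
    · exact Q.adj_symm h
  loopless := by
    constructor
    rintro (a | a) h
    · exact P.irrefl h
    · exact Q.irrefl h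

/-- The signature making all edges of `P` and all cross edges positive, and all edges of
`Q` negative. -/
def mixedSign {α β : Type*} : (α ⊕ β) → (α ⊕ β) → ℤ
  | Sum.inr _, Sum.inr _ => -1
  | _, _ => 1

section AuxLemmas

variable {α β : Type*} {P : SimpleGraph α} {Q : SimpleGraph β}

lemma sj_adj_lr (a : α) (b : β) : (sumJoin P Q).Adj (Sum.inl a) (Sum.inr b) := trivial

lemma sj_adj_rl (b : β) (a : α) : (sumJoin P Q).Adj (Sum.inr b) (Sum.inl a) := trivial

lemma sj_adj_ll {a a' : α} : (sumJoin P Q).Adj (Sum.inl a) (Sum.inl a') ↔ P.Adj a a' := Iff.rfl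

lemma sj_adj_rr {b b' : β} : (sumJoin P Q).Adj (Sum.inr b) (Sum.inr b') ↔ Q.Adj b b' := Iff.rfl

lemma walkSign_nil' {V : Type*} {G : SimpleGraph V} (σ : V → V → ℤ) (u : V) :
    walkSign σ (Walk.nil : G.Walk u u) = 1 := by simp [walkSign]

lemma walk_length_one {V : Type*} {G : SimpleGraph V} {u v : V} (p : G.Walk u v)
    (hp : p.length = 1) : ∃ h : G.Adj u v, p = Walk.cons h Walk.nil := by
  cases p with
  | nil => simp at hp
  | cons h q =>
    cases q with
    | nil => exact ⟨h, rfl⟩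
    | cons h' r => simp [Walk.length_cons] at hp

lemma walk_length_two {V : Type*} {G : SimpleGraph V} {u v : V} (p : G.Walk u v)
    (hp : p.length = 2) :
    ∃ (w : V) (h1 : G.Adj u w) (h2 : G.Adj w v), p = Walk.cons h1 (Walk.cons h2 Walk.nil) := by
  cases p with
  | nil => simp at hp
  | cons h q =>
    cases q with
    | nil => simp at hp
    | cons h' r =>
      cases r with
      | nil => exact ⟨_, h, h', rfl⟩
      | cons h'' s => simp [Walk.length_cons] at hp

lemma dist_eq_two' {V : Type*} {G : SimpleGraph V} {u v : V} (hne : u ≠ v)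
    (hadj : ¬ G.Adj u v) {w : V} (h1 : G.Adj u w) (h2 : G.Adj w v) : G.dist u v = 2 := by
  have hle : G.dist u v ≤ 2 := by
    simpa using dist_le (Walk.cons h1 (Walk.cons h2 Walk.nil))
  have h0 : G.dist u v ≠ 0 := by
    rw [dist_ne_zero_iff_ne_and_reachable]
    exact ⟨hne, ⟨Walk.cons h1 (Walk.cons h2 Walk.nil)⟩⟩
  have h1' : G.dist u v ≠ 1 := fun h => hadj (dist_eq_one_iff_adj.mp h)
  omega

lemma tri_cycle1 {b1 b2 : β} (hb : Q.Adj b1 b2) (a0 : α) :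
    (Walk.cons (sj_adj_rr.mpr hb) (Walk.cons (sj_adj_rl b2 a0) (Walk.cons (sj_adj_lr a0 b1)
      (Walk.nil : (sumJoin P Q).Walk _ _)))).IsCycle := by
  rw [Walk.cons_isCycle_iff]
  constructor
  · rw [Walk.isPath_def]
    simp [Walk.support, hb.ne']
  · simp [Walk.edges, Sym2.eq_iff]

lemma tri_sign1 {b1 b2 : β} (hb : Q.Adj b1 b2) (a0 : α) :
    walkSign mixedSign (Walk.cons (sj_adj_rr.mpr hb) (Walk.cons (sj_adj_rl b2 a0)
      (Walk.cons (sj_adj_lr a0 b1) (Walk.nil : (sumJoin P Q).Walk _ _)))) = -1 := by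
  simp [walkSign, mixedSign]

lemma tri_cycle2 {a1 a2 : α} (ha : P.Adj a1 a2) (b0 : β) :
    (Walk.cons (sj_adj_ll.mpr ha) (Walk.cons (sj_adj_lr a2 b0) (Walk.cons (sj_adj_rl b0 a1)
      (Walk.nil : (sumJoin P Q).Walk _ _)))).IsCycle := by
  rw [Walk.cons_isCycle_iff]
  constructor
  · rw [Walk.isPath_def]
    simp [Walk.support, ha.ne']
  · simp [Walk.edges, Sym2.eq_iff]

lemma tri_sign2 {a1 a2 : α} (ha : P.Adj a1 a2) (b0 : β) :
    walkSign (fun x y => -(mixedSign x y)) (Walk.cons (sj_adj_ll.mpr ha)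
      (Walk.cons (sj_adj_lr a2 b0) (Walk.cons (sj_adj_rl b0 a1)
      (Walk.nil : (sumJoin P Q).Walk _ _)))) = -1 := by
  simp [walkSign, mixedSign]

end AuxLemmas

/-- Let `P` and `Q` be finite simple graphs, each 2-connected, not
complete and not bipartite.  Sign `P` all positive, `Q` all negative, and join them by an
all-positive complete bipartite graph `K_{p,q}`.  The resulting signed graph `Σ` is not
balanced, not antibalanced and not geodetic, but it is distance-compatible; indeed `Σ`
has diameter `2` and every shortest path between non-adjacent vertices is positive. -/
theorem join_construction_compatible {α β : Type*} [Fintype α] [Fintype β]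
    (P : SimpleGraph α) (Q : SimpleGraph β)
    (hP2 : TwoConnected P) (hQ2 : TwoConnected Q)
    (hPnc : P ≠ ⊤) (hQnc : Q ≠ ⊤)
    (hPnb : ¬ P.Colorable 2) (hQnb : ¬ Q.Colorable 2) :
    ¬ IsBalanced (sumJoin P Q) mixedSign ∧
    ¬ IsBalanced (sumJoin P Q) (fun x y => -(mixedSign x y)) ∧
    ¬ IsGeodetic (sumJoin P Q) ∧
    IsCompatibleGraph (sumJoin P Q) mixedSign ∧
    (∀ u v : α ⊕ β, (sumJoin P Q).dist u v ≤ 2) ∧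
    (∃ u v : α ⊕ β, (sumJoin P Q).dist u v = 2) ∧
    (∀ u v : α ⊕ β, ¬ (sumJoin P Q).Adj u v →
      ∀ p : (sumJoin P Q).Walk u v, IsShortestPath p → walkSign mixedSign p = 1) := by
  obtain ⟨hPcard, -⟩ := hP2
  obtain ⟨hQcard, -⟩ := hQ2
  have hαne : Nonempty α := Fintype.card_pos_iff.mp (by omega)
  have hβne : Nonempty β := Fintype.card_pos_iff.mp (by omega)
  obtain ⟨a0⟩ := hαne
  obtain ⟨b0⟩ := hβne
  have hPedge : ∃ a a', P.Adj a a' := by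
    by_contra h
    push_neg at h
    exact hPnb ⟨SimpleGraph.Coloring.mk (fun _ => (0 : Fin 2))
      (fun {x y} hxy => absurd hxy (h x y))⟩
  have hQedge : ∃ b b', Q.Adj b b' := by
    by_contra h
    push_neg at h
    exact hQnb ⟨SimpleGraph.Coloring.mk (fun _ => (0 : Fin 2))
      (fun {x y} hxy => absurd hxy (h x y))⟩
  have hPna : ∃ a a', a ≠ a' ∧ ¬ P.Adj a a' := by
    by_contra h
    push_neg at h
    apply hPnc
    ext a a'
    simp only [top_adj]
    exact ⟨fun had => had.ne, fun hne => h a a' hne⟩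
  -- KEY: every shortest path between non-adjacent vertices is positive
  have key : ∀ u v : α ⊕ β, ¬ (sumJoin P Q).Adj u v →
      ∀ p : (sumJoin P Q).Walk u v, IsShortestPath p → walkSign mixedSign p = 1 := by
    intro u v hna p hp
    obtain ⟨hpath, hlen⟩ := hp
    by_cases huv : u = v
    · subst huv
      cases p with
      | nil => exact walkSign_nil' _ _
      | cons h q =>
        rw [dist_self] at hlen
        simp [Walk.length_cons] at hlen
    · rcases u with a | b <;> rcases v with a' | b'
      · have hd2 := dist_eq_two' huv hna (sj_adj_lr a b0) (sj_adj_rl b0 a')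
        rw [hd2] at hlen
        obtain ⟨w, h1, h2, rfl⟩ := walk_length_two p hlen
        rcases w with c | c <;> simp [walkSign, mixedSign]
      · exact absurd (sj_adj_lr a b') hna
      · exact absurd (sj_adj_rl b a') hna
      · have hd2 := dist_eq_two' huv hna (sj_adj_rl b a0) (sj_adj_lr a0 b')
        rw [hd2] at hlen
        obtain ⟨w, h1, h2, rfl⟩ := walk_length_two p hlen
        rcases w with c | c <;> simp [walkSign, mixedSign]
  refine ⟨?_, ?_, ?_, ?_, ?_, ?_, key⟩
  · -- not balanced
    intro hbal
    obtain ⟨b1, b2, hb⟩ := hQedge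
    have h := hbal _ _ (tri_cycle1 (P := P) hb a0)
    rw [tri_sign1 hb a0] at h
    norm_num at h
  · -- not antibalanced
    intro hbal
    obtain ⟨a1, a2, ha⟩ := hPedge
    have h := hbal _ _ (tri_cycle2 (Q := Q) ha b0)
    rw [tri_sign2 ha b0] at h
    norm_num at h
  · -- not geodetic
    intro hgeo
    obtain ⟨a1, a2, hne, hna⟩ := hPna
    obtain ⟨b1, b2, hb⟩ := hQedge
    have hne' : (Sum.inl a1 : α ⊕ β) ≠ Sum.inl a2 := by simp [hne]
    have hna' : ¬ (sumJoin P Q).Adj (Sum.inl a1) (Sum.inl a2) := hna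
    have hd := dist_eq_two' hne' hna' (sj_adj_lr a1 b1) (sj_adj_rl b1 a2)
    have hp1 : IsShortestPath (Walk.cons (sj_adj_lr a1 b1)
        (Walk.cons (sj_adj_rl b1 a2) (Walk.nil : (sumJoin P Q).Walk _ _))) := by
      constructor
      · rw [Walk.isPath_def]
        simp [Walk.support, hne]
      · simp [Walk.length_cons, hd]
    have hp2 : IsShortestPath (Walk.cons (sj_adj_lr a1 b2)
        (Walk.cons (sj_adj_rl b2 a2) (Walk.nil : (sumJoin P Q).Walk _ _))) := by
      constructor
      · rw [Walk.isPath_def]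
        simp [Walk.support, hne]
      · simp [Walk.length_cons, hd]
    have heq := hgeo _ _ _ _ hp1 hp2
    have hsup := congrArg Walk.support heq
    simp [Walk.support] at hsup
    exact hb.ne hsup
  · -- distance-compatible
    intro u v p q hp hq
    by_cases hadj : (sumJoin P Q).Adj u v
    · have hd : (sumJoin P Q).dist u v = 1 := dist_eq_one_iff_adj.mpr hadj
      obtain ⟨h1, rfl⟩ := walk_length_one p (by rw [hp.2, hd])
      obtain ⟨h2, rfl⟩ := walk_length_one q (by rw [hq.2, hd])
      simp [walkSign]
    · rw [key u v hadj p hp, key u v hadj q hq]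
  · -- diameter at most 2
    intro u v
    rcases u with a | b <;> rcases v with a' | b'
    · have := dist_le (Walk.cons (sj_adj_lr (P := P) (Q := Q) a b0)
        (Walk.cons (sj_adj_rl b0 a') Walk.nil))
      simp at this
      omega
    · have := dist_le (Walk.cons (sj_adj_lr (P := P) (Q := Q) a b') Walk.nil)
      simp at this
      omega
    · have := dist_le (Walk.cons (sj_adj_rl (P := P) (Q := Q) b a') Walk.nil)
      simp at this
      omega
    · have := dist_le (Walk.cons (sj_adj_rl (P := P) (Q := Q) b a0)
        (Walk.cons (sj_adj_lr a0 b') Walk.nil))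
      simp at this
      omega
  · -- some pair at distance 2
    obtain ⟨a1, a2, hne, hna⟩ := hPna
    exact ⟨Sum.inl a1, Sum.inl a2,
      dist_eq_two' (by simp [hne])
        (show ¬ (sumJoin P Q).Adj (Sum.inl a1) (Sum.inl a2) from hna)
        (sj_adj_lr a1 b0) (sj_adj_rl b0 a2)⟩
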